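/- arXiv:1807.01676 — 5 statements merged into one kernel-verified Lean document; each statement's English description precedes it below -/
import Mathlib

section
/- Let a,b,c,d,e,f,g be positive reals and define Δ = (ad - g²)(bc - f²) - e²(ab + cd - e² + 2fg), α = e²(b(ad - g²) - de²)(b(cd - e²) - df²), γ = e²(a(bc - f²) - ce²)(a(cd - e²) - cg²), and β = Δ(Δ + e²(ab + cd + 4fg)) + 2e⁴(abfg + adf² + bcg² + cdfg). Then β² - 4αγ = Δ(Δ + 4e²fg)·((ad - g²)(bc - f²) - e⁴)². -/
theorem stmt_3 (a b c d e f g : ℝ)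
    (ha : 0 < a) (hb : 0 < b) (hc : 0 < c) (hd : 0 < d)
    (he : 0 < e) (hf : 0 < f) (hg : 0 < g) :
    let Δ := (a * d - g ^ 2) * (b * c - f ^ 2) - e ^ 2 * (a * b + c * d - e ^ 2 + 2 * f * g)
    let α := e ^ 2 * (b * (a * d - g ^ 2) - d * e ^ 2) * (b * (c * d - e ^ 2) - d * f ^ 2)
    let γ := e ^ 2 * (a * (b * c - f ^ 2) - c * e ^ 2) * (a * (c * d - e ^ 2) - c * g ^ 2)
    let β := Δ * (Δ + e ^ 2 * (a * b + c * d + 4 * f * g)) +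
      2 * e ^ 4 * (a * b * f * g + a * d * f ^ 2 + b * c * g ^ 2 + c * d * f * g)
    β ^ 2 - 4 * α * γ =
      Δ * (Δ + 4 * e ^ 2 * f * g) * ((a * d - g ^ 2) * (b * c - f ^ 2) - e ^ 4) ^ 2 := by
  intro Δ α γ β; simp only [Δ,α,γ,β]; ring
end

section
/- Let r ≥ 0, α₁,α₂,α₃,α₄ ≥ 0, β₁,β₂,β₃ ≥ 0. Then (α₁²α₄²β₂²(β₁² + β₃²)) + (α₃²α₄²β₁²(β₂² + β₁²r²)) + r²(α₂α₃β₁² - α₁²β₂β₃)² equals (ad - g²)(bc - f²) - e²(ab + cd - e² + 2fg), where a = r²α₁² + α₂² + α₄², b = β₁² + β₃², c = α₁² + α₃², d = r²β₁² + β₂², e = rα₁β₁, f = α₃β₃, g = α₂β₂. In particular this quantity Δ is nonnegative, and it is strictly positive when all of α₁,α₂,α₃,α₄,β₁,β₂,β₃ and r are strictly positive. -/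
theorem stmt_4 (r α₁ α₂ α₃ α₄ β₁ β₂ β₃ : ℝ)
    (hr : 0 ≤ r) (h1 : 0 ≤ α₁) (h2 : 0 ≤ α₂) (h3 : 0 ≤ α₃) (h4 : 0 ≤ α₄)
    (g1 : 0 ≤ β₁) (g2 : 0 ≤ β₂) (g3 : 0 ≤ β₃) :
    let a := r ^ 2 * α₁ ^ 2 + α₂ ^ 2 + α₄ ^ 2
    let b := β₁ ^ 2 + β₃ ^ 2
    let c := α₁ ^ 2 + α₃ ^ 2
    let d := r ^ 2 * β₁ ^ 2 + β₂ ^ 2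
    let e := r * α₁ * β₁
    let f := α₃ * β₃
    let g := α₂ * β₂
    let Δ := (a * d - g ^ 2) * (b * c - f ^ 2) - e ^ 2 * (a * b + c * d - e ^ 2 + 2 * f * g)
    (α₁ ^ 2 * α₄ ^ 2 * β₂ ^ 2 * (β₁ ^ 2 + β₃ ^ 2)
      + α₃ ^ 2 * α₄ ^ 2 * β₁ ^ 2 * (β₂ ^ 2 + β₁ ^ 2 * r ^ 2)
      + r ^ 2 * (α₂ * α₃ * β₁ ^ 2 - α₁ ^ 2 * β₂ * β₃) ^ 2 = Δ) ∧
    0 ≤ Δ ∧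
    (0 < α₁ → 0 < α₂ → 0 < α₃ → 0 < α₄ → 0 < β₁ → 0 < β₂ → 0 < β₃ → 0 < r → 0 < Δ) := by
  intro a b c d e f g Δ
  have key : α₁ ^ 2 * α₄ ^ 2 * β₂ ^ 2 * (β₁ ^ 2 + β₃ ^ 2)
      + α₃ ^ 2 * α₄ ^ 2 * β₁ ^ 2 * (β₂ ^ 2 + β₁ ^ 2 * r ^ 2)
      + r ^ 2 * (α₂ * α₃ * β₁ ^ 2 - α₁ ^ 2 * β₂ * β₃) ^ 2 = Δ := by
    simp only [Δ, a, b, c, d, e, f, g]; ring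
  refine ⟨key, ?_, ?_⟩
  · rw [← key]; positivity
  · intro p1 p2 p3 p4 q1 q2 q3 pr
    rw [← key]
    positivity
end

section
/- There is no 4×4 unitary matrix U = (u_{ij}) such that the operators Lᵢ = Σⱼ u_{ij}Kⱼ, where K₁ = (1/2)[[1,1],[0,0]], K₂ = (1/2)[[0,0],[1,-1]], K₃ = (1/2)[[1,0],[0,1]], K₄ = (1/2)[[0,1],[1,0]], are all of one of the four forms [[*,0],[0,*]], [[0,*],[*,0]], [[*,0],[0,0]], [[0,0],[*,0]] (diagonal, antidiagonal, or single-entry matrices with entries from ℂ). -/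
open Matrix

/-- A 2×2 matrix is of one of the four forms [[*,0],[0,*]], [[0,*],[*,0]],
[[*,0],[0,0]], [[0,0],[*,0]]. -/
def SIOform (M : Matrix (Fin 2) (Fin 2) ℂ) : Prop :=
  (M 0 1 = 0 ∧ M 1 0 = 0) ∨                             -- diagonal
  (M 0 0 = 0 ∧ M 1 1 = 0) ∨                             -- antidiagonal
  (M 0 1 = 0 ∧ M 1 0 = 0 ∧ M 1 1 = 0) ∨                 -- [[*,0],[0,0]]
  (M 0 0 = 0 ∧ M 0 1 = 0 ∧ M 1 1 = 0)                   -- [[0,0],[*,0]]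

theorem stmt_9 :
    let K : Fin 4 → Matrix (Fin 2) (Fin 2) ℂ :=
      ![(1 / 2 : ℂ) • !![1, 1; 0, 0],
        (1 / 2 : ℂ) • !![0, 0; 1, -1],
        (1 / 2 : ℂ) • !![1, 0; 0, 1],
        (1 / 2 : ℂ) • !![0, 1; 1, 0]]
    ¬ ∃ U ∈ Matrix.unitaryGroup (Fin 4) ℂ,
        ∀ i : Fin 4, SIOform (∑ j : Fin 4, U i j • K j) := by
  intro K
  rintro ⟨U, hU, hL⟩
  -- Each row of U is of "diagonal" type D or "antidiagonal" type A
  have hrow : ∀ i : Fin 4,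
      (U i 1 = U i 0 ∧ U i 3 = -U i 0) ∨ (U i 1 = -U i 0 ∧ U i 2 = -U i 0) := by
    intro i
    have h := hL i
    simp [SIOform, K, Fin.sum_univ_four, Matrix.sum_apply, Matrix.cons_val_succ] at h
    rcases h with ⟨h1, h2⟩ | ⟨h1, h2⟩ | ⟨h1, h2, h3⟩ | ⟨h1, h2, h3⟩
    · exact Or.inl ⟨by linear_combination 2*h2 - 2*h1, by linear_combination 2*h1⟩
    · exact Or.inr ⟨by linear_combination 2*h1 - 2*h2, by linear_combination 2*h1⟩
    · exact Or.inl ⟨by linear_combination 2*h2 - 2*h1, by linear_combination 2*h1⟩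
    · exact Or.inr ⟨by linear_combination 2*h1 - 2*h3, by linear_combination 2*h1⟩
  -- per-row algebraic identity
  have key : ∀ i : Fin 4,
      (starRingEnd ℂ) (U i 0) * U i 3 + (starRingEnd ℂ) (U i 1) * U i 3
        + (starRingEnd ℂ) (U i 0) * U i 2 - (starRingEnd ℂ) (U i 1) * U i 2
        = -2 * ((starRingEnd ℂ) (U i 0) * U i 0) := by
    intro i
    rcases hrow i with ⟨h1, h2⟩ | ⟨h1, h2⟩ <;>
      simp [h1, h2, map_add, map_sub, map_neg] <;> ring
  -- column relations from star U * U = 1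
  have hUU : star U * U = 1 := hU.1
  have col : ∀ a b : Fin 4, (starRingEnd ℂ) (U 0 a) * U 0 b + (starRingEnd ℂ) (U 1 a) * U 1 b
      + (starRingEnd ℂ) (U 2 a) * U 2 b + (starRingEnd ℂ) (U 3 a) * U 3 b
      = if a = b then 1 else 0 := by
    intro a b
    have := congrFun (congrFun hUU a) b
    simpa [Matrix.mul_apply, Fin.sum_univ_four, Matrix.one_apply, mul_comm, add_assoc] using this
  have e03 := col 0 3
  have e13 := col 1 3
  have e02 := col 0 2
  have e12 := col 1 2
  have e00 := col 0 0
  simp only [show ((0:Fin 4)=3)=False by simp, show ((1:Fin 4)=3)=False by simp, show ((0:Fin 4)=2)=False by simp, show ((1:Fin 4)=2)=False by simp, show ((0:Fin 4)=0)=True by simp, if_true, if_false] at e03 e13 e02 e12 e00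
  have contra : (-2 : ℂ) = 0 := by
    linear_combination e03 + e13 + e02 - e12 + 2 * e00
      - key 0 - key 1 - key 2 - key 3
  norm_num at contra
end

section
/- For θ ∈ (0, π/2) and φ ∈ ℝ, the 2×2 real orthogonal matrix U = [[cos θ, sin θ],[sin θ, -cos θ]] transforms the pair of Kraus operators K₁ = [[cos θ, sin θ·e^{iφ}],[0,0]], K₂ = [[sin θ, -cos θ·e^{iφ}],[0,0]] (via Lᵢ = Σⱼ u_{ij}Kⱼ) into the pair [[1, 0],[0,0]], [[0, e^{iφ}],[0,0]], both of which are strictly incoherent (each has at most one nonzero entry). -/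
open Matrix Complex
theorem stmt_11 (θ φ : ℝ) (hθ : θ ∈ Set.Ioo 0 (Real.pi / 2)) :
    let K₁ : Matrix (Fin 2) (Fin 2) ℂ :=
      !![(Real.cos θ : ℂ), (Real.sin θ : ℂ) * Complex.exp (φ * Complex.I); 0, 0]
    let K₂ : Matrix (Fin 2) (Fin 2) ℂ :=
      !![(Real.sin θ : ℂ), -(Real.cos θ : ℂ) * Complex.exp (φ * Complex.I); 0, 0]
    (Real.cos θ : ℂ) • K₁ + (Real.sin θ : ℂ) • K₂ = !![1, 0; 0, 0] ∧
    (Real.sin θ : ℂ) • K₁ + (-(Real.cos θ : ℂ)) • K₂ =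
      !![0, Complex.exp (φ * Complex.I); 0, 0] := by
  intro K₁ K₂
  have h : Complex.sin (θ : ℂ) ^ 2 + Complex.cos (θ : ℂ) ^ 2 = 1 :=
    Complex.sin_sq_add_cos_sq (θ : ℂ)
  refine ⟨?_, ?_⟩ <;> ext i j <;> fin_cases i <;> fin_cases j <;>
    simp [K₁, K₂, Matrix.smul_apply] <;>
    first
      | ring1
      | linear_combination h
      | linear_combination Complex.exp (φ * Complex.I) * h
end

section
/- Let K₁ = (1/2)[[1,1],[0,0]], K₂ = (1/2)[[0,0],[1,-1]], K₃ = (1/2)[[1,0],[0,-1]], K₄ = (1/2)[[0,1],[1,0]]. Then Σᵢ Kᵢ†Kᵢ = I, and the span of {K₁, K₂, K₃, K₄} over ℂ has dimension exactly 3 (so the channel has Kraus rank 3). -/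
set_option linter.unreachableTactic false
set_option linter.unusedTactic false

open Matrix

theorem stmt_19 :
    let K₁ : Matrix (Fin 2) (Fin 2) ℂ := (1 / 2 : ℂ) • !![1, 1; 0, 0]
    let K₂ : Matrix (Fin 2) (Fin 2) ℂ := (1 / 2 : ℂ) • !![0, 0; 1, -1]
    let K₃ : Matrix (Fin 2) (Fin 2) ℂ := (1 / 2 : ℂ) • !![1, 0; 0, -1]
    let K₄ : Matrix (Fin 2) (Fin 2) ℂ := (1 / 2 : ℂ) • !![0, 1; 1, 0]
    (K₁ᴴ * K₁ + K₂ᴴ * K₂ + K₃ᴴ * K₃ + K₄ᴴ * K₄ = 1) ∧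
    Module.finrank ℂ (Submodule.span ℂ {K₁, K₂, K₃, K₄}) = 3 := by
  intro K₁ K₂ K₃ K₄
  constructor
  · ext i j
    fin_cases i <;> fin_cases j <;>
      simp [K₁, K₂, K₃, K₄, Matrix.mul_apply, Fin.sum_univ_two, Matrix.one_apply,
        Matrix.conjTranspose_apply, Complex.conj_ofNat] <;> ring
  · have h4 : K₄ = K₁ + K₂ - K₃ := by
      ext i j
      fin_cases i <;> fin_cases j <;> simp [K₁, K₂, K₃, K₄] <;> ring
    have hspan : ({K₁, K₂, K₃, K₄} : Set (Matrix (Fin 2) (Fin 2) ℂ)) =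
        insert K₄ {K₁, K₂, K₃} := by
      ext x; simp; tauto
    have hmem : K₄ ∈ Submodule.span ℂ ({K₁, K₂, K₃} : Set (Matrix (Fin 2) (Fin 2) ℂ)) := by
      rw [h4]
      exact sub_mem (add_mem (Submodule.subset_span (by simp))
        (Submodule.subset_span (by simp))) (Submodule.subset_span (by simp))
    rw [hspan, Submodule.span_insert_eq_span hmem]
    have hr : ({K₁, K₂, K₃} : Set (Matrix (Fin 2) (Fin 2) ℂ)) = Set.range ![K₁, K₂, K₃] := by
      simp [Matrix.range_cons, Matrix.range_empty]
      ext x; simp; tauto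
    rw [hr]
    rw [finrank_span_eq_card]
    · simp
    · rw [Fintype.linearIndependent_iff]
      intro g hg
      have h01 := congrFun (congrFun hg 0) 1
      have h10 := congrFun (congrFun hg 1) 0
      have h00 := congrFun (congrFun hg 0) 0
      simp [Fin.sum_univ_three, K₁, K₂, K₃] at h01 h10 h00
      intro i
      fin_cases i <;> simp_all <;> linear_combination 2*h00 - 2*h01
end
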